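/- Let L ∈ F_q^{N×ℓ} be a valid scalar linear encoder for G with query sets R_1,...,R_N, with codelength ℓ = minrk_q(G). Suppose that for each i ∈ [N] there are nonzero scalars α_{i,k} ∈ F_q (k ∈ R_i) and a vector u_i ∈ F_q^N with supp(u_i) ⊆ K_i such that e_i + u_i = ∑_{k∈R_i} α_{i,k} L_k, and let A be the N×N matrix whose i-th column is e_i + u_i (a fitting matrix corresponding to L). If z is a nonzero vector in the null space of A and S = supp(z), then ∑_{i∈S} |R_i| ≥ 2·minrk_q(G_S). -/

import Mathlib

/-- A valid scalar linear index code for the problem with side information sets `K`. -/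
def ValidScalarCode {N ℓ : ℕ} (q : Type) [Field q]
    (K : Fin N → Finset (Fin N))
    (L : Matrix (Fin N) (Fin ℓ) q)
    (R : Fin N → Finset (Fin ℓ)) : Prop :=
  ∀ i : Fin N,
    ∃ u : Fin N → q,
      (∀ j, u j ≠ 0 → j ∈ K i) ∧
      u + Pi.single i 1 ∈ Submodule.span q ((fun k (j : Fin N) => L j k) '' (R i : Set (Fin ℓ)))

/-- The minrank of the side information graph over `F_q`. -/
noncomputable def minrk (q : Type) [Field q] {N : ℕ} (K : Fin N → Finset (Fin N)) : ℕ :=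
  sInf {n : ℕ | ∃ A : Matrix (Fin N) (Fin N) q,
    (∀ i, A i i = 1) ∧ (∀ i j, j ≠ i → j ∉ K i → A j i = 0) ∧ A.rank = n}

/-- The minrank over `F_q` of the subproblem induced by the vertex subset `S`. -/
noncomputable def minrkOn (q : Type) [Field q] {N : ℕ} (K : Fin N → Finset (Fin N))
    (S : Finset (Fin N)) : ℕ :=
  sInf {n : ℕ | ∃ A : Matrix {i // i ∈ S} {i // i ∈ S} q,
    (∀ i, A i i = 1) ∧
    (∀ i j : {i // i ∈ S}, j ≠ i → (j : Fin N) ∉ K (i : Fin N) → A j i = 0) ∧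
    A.rank = n}

/-- Let `L` be a valid scalar linear encoder for `G` of optimal codelength
`ℓ = minrk_q(G)`, with decoding data: nonzero coefficients `α i k` (`k ∈ R i`) and side
information vectors `u i` with `e_i + u_i = ∑_{k ∈ R i} α_{i,k} L_k`; let `A` be the fitting
matrix whose `i`-th column is `e_i + u_i`. If `z ≠ 0` lies in the null space of `A` and
`S = supp(z)`, then `∑_{i ∈ S} |R_i| ≥ 2·minrk_q(G_S)`. -/
theorem optimal_scalar_code_locality_lower_bound
    {N ℓ : ℕ} (q : Type) [Field q] [Fintype q]
    (K : Fin N → Finset (Fin N)) (hK : ∀ i, i ∉ K i)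
    (L : Matrix (Fin N) (Fin ℓ) q) (R : Fin N → Finset (Fin ℓ))
    (hvalid : ValidScalarCode q K L R)
    (hℓ : ℓ = minrk q K)
    (u : Fin N → Fin N → q) (α : Fin N → Fin ℓ → q)
    (hu : ∀ i j, u i j ≠ 0 → j ∈ K i)
    (hα : ∀ i, ∀ k ∈ R i, α i k ≠ 0)
    (heq : ∀ i j : Fin N, (Pi.single i (1 : q) : Fin N → q) j + u i j = ∑ k ∈ R i, α i k * L j k)
    (A : Matrix (Fin N) (Fin N) q)
    (hA : ∀ i j : Fin N, A j i = (Pi.single i (1 : q) : Fin N → q) j + u i j)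
    (z : Fin N → q) (hz : z ≠ 0) (hAz : A.mulVec z = 0)
    (S : Finset (Fin N)) (hS : ∀ i, i ∈ S ↔ z i ≠ 0) :
    2 * minrkOn q K S ≤ ∑ i ∈ S, (R i).card := by
  classical
  -- u i i = 0
  have hui : ∀ i, u i i = 0 := by
    intro i; by_contra h; exact hK i (hu i i h)
  -- the matrix C with A = L * C
  set C : Matrix (Fin ℓ) (Fin N) q := fun k i => if k ∈ R i then α i k else 0 with hC
  have hAC : A = L * C := by
    ext j i
    rw [hA i j, heq i j, Matrix.mul_apply]
    rw [show (∑ k : Fin ℓ, L j k * C k i) = ∑ k : Fin ℓ, if k ∈ R i then α i k * L j k else 0 by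
      apply Finset.sum_congr rfl; intro k _
      simp only [hC]; split <;> ring]
    rw [Finset.sum_ite_mem, Finset.univ_inter]
  -- A fits G, so ℓ = minrk ≤ rank A
  have hfitA : ℓ ≤ A.rank := by
    rw [hℓ]
    apply Nat.sInf_le
    refine ⟨A, ?_, ?_, rfl⟩
    · intro i; rw [hA i i, Pi.single_eq_same, hui, add_zero]
    · intro i j hji hjK
      rw [hA i j, Pi.single_eq_of_ne hji, zero_add]
      by_contra h; exact hjK (hu i j h)
  -- rank L = ℓ
  have hrankL : L.rank = ℓ := by
    refine le_antisymm (by simpa using L.rank_le_card_width) ?_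
    calc ℓ ≤ A.rank := hfitA
    _ ≤ L.rank := by rw [hAC]; exact Matrix.rank_mul_le_left L C
  -- mulVecLin L is injective
  have hker : LinearMap.ker L.mulVecLin = ⊥ := by
    have h1 := LinearMap.finrank_range_add_finrank_ker L.mulVecLin
    rw [show Module.finrank q (LinearMap.range L.mulVecLin) = L.rank from rfl, hrankL,
      Module.finrank_fin_fun] at h1
    have : Module.finrank q (LinearMap.ker L.mulVecLin) = 0 := by omega
    exact Submodule.finrank_eq_zero.mp this
  -- hence C.mulVec z = 0
  have hw : C.mulVec z = 0 := by
    have : L.mulVecLin (C.mulVec z) = 0 := by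
      rw [Matrix.mulVecLin_apply, Matrix.mulVec_mulVec, ← hAC, hAz]
    exact (LinearMap.ker_eq_bot.mp hker).eq_iff.mp (by simpa using this)
  -- set of used queries
  set T : Finset (Fin ℓ) := S.biUnion R with hT
  have hRT : ∀ i ∈ S, R i ⊆ T := fun i hi => Finset.subset_biUnion_of_mem R hi
  -- each k ∈ T is queried by at least two members of S
  have htwo : ∀ k ∈ T, 2 ≤ (S.filter (fun i => k ∈ R i)).card := by
    intro k hk
    obtain ⟨i₀, hi₀S, hi₀R⟩ := Finset.mem_biUnion.mp hk
    have hi₀F : i₀ ∈ S.filter (fun i => k ∈ R i) := Finset.mem_filter.mpr ⟨hi₀S, hi₀R⟩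
    by_contra hlt
    push_neg at hlt
    have h1 : (S.filter (fun i => k ∈ R i)).card = 1 := by
      have := Finset.card_pos.mpr ⟨i₀, hi₀F⟩; omega
    obtain ⟨a, ha⟩ := Finset.card_eq_one.mp h1
    have hai : a = i₀ := by
      have := hi₀F; rw [ha] at this; exact (Finset.mem_singleton.mp this).symm
    -- compute the k-entry of C.mulVec z
    have hwk : (0 : q) = α i₀ k * z i₀ := by
      have h0 : C.mulVec z k = 0 := congrFun hw k
      rw [Matrix.mulVec, dotProduct] at h0
      have : (∑ i : Fin N, C k i * z i)
          = ∑ i ∈ S.filter (fun i => k ∈ R i), α i k * z i := by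
        rw [← Finset.sum_filter_of_ne (s := Finset.univ)
          (p := fun i => i ∈ S ∧ k ∈ R i) (f := fun i => C k i * z i) ?_]
        · apply Finset.sum_congr
          · ext i; simp [Finset.mem_filter]
          · intro i hi
            simp only [Finset.mem_filter] at hi
            simp [hC, hi.2]
        · intro i _ hne
          have hne' : C k i * z i ≠ 0 := hne
          constructor
          · exact (hS i).mpr fun h => hne' (by rw [h, mul_zero])
          · by_contra h; exact hne' (by simp [hC, h])
      rw [this, ha, hai, Finset.sum_singleton] at h0
      exact h0.symm
    exact (mul_ne_zero (hα i₀ k hi₀R) ((hS i₀).mp hi₀S)) hwk.symm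
  -- minrkOn ≤ |T|
  have hminT : minrkOn q K S ≤ T.card := by
    set B : Matrix {i // i ∈ S} {i // i ∈ S} q := fun j i => A j i with hB
    set L' : Matrix {i // i ∈ S} {k // k ∈ T} q := fun j k => L j k with hL'
    set C' : Matrix {k // k ∈ T} {i // i ∈ S} q := fun k i => C k i with hC'
    have hBmul : B = L' * C' := by
      ext j i
      rw [Matrix.mul_apply]
      simp only [hB, hL', hC', hAC, Matrix.mul_apply]
      rw [Finset.sum_coe_sort T (fun k => L (j : Fin N) k * C k (i : Fin N))]
      symm
      apply Finset.sum_subset (Finset.subset_univ T)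
      intro k _ hkT
      have : k ∉ R (i : Fin N) := fun h => hkT (hRT i i.2 h)
      simp [hC, this]
    have hBrank : B.rank ≤ T.card := by
      calc B.rank = (L' * C').rank := by rw [hBmul]
      _ ≤ C'.rank := Matrix.rank_mul_le_right L' C'
      _ ≤ Fintype.card {k // k ∈ T} := C'.rank_le_card_height
      _ = T.card := Fintype.card_coe T
    refine le_trans (Nat.sInf_le ⟨B, ?_, ?_, rfl⟩) hBrank
    · intro i
      rw [hB]
      show A (i : Fin N) (i : Fin N) = 1
      rw [hA i i, Pi.single_eq_same, hui, add_zero]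
    · intro i j hji hjK
      rw [hB]
      show A (j : Fin N) (i : Fin N) = 0
      have hne : (j : Fin N) ≠ (i : Fin N) := fun h => hji (Subtype.ext h)
      rw [hA i j, Pi.single_eq_of_ne hne, zero_add]
      by_contra h; exact hjK (hu (i : Fin N) (j : Fin N) h)
  -- counting
  have hcount : 2 * T.card ≤ ∑ i ∈ S, (R i).card := by
    have key : ∑ i ∈ S, (R i).card = ∑ k ∈ T, (S.filter (fun i => k ∈ R i)).card := by
      have : ∀ i ∈ S, (R i).card = ∑ k ∈ T, if k ∈ R i then 1 else 0 := by
        intro i hi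
        rw [← Finset.card_filter]
        congr 1
        rw [Finset.filter_mem_eq_inter, Finset.inter_eq_right.mpr (hRT i hi)]
      rw [Finset.sum_congr rfl this, Finset.sum_comm]
      apply Finset.sum_congr rfl
      intro k _
      rw [Finset.card_filter]
    rw [key]
    calc 2 * T.card = ∑ _k ∈ T, 2 := by rw [Finset.sum_const, smul_eq_mul, mul_comm]
    _ ≤ ∑ k ∈ T, (S.filter (fun i => k ∈ R i)).card := Finset.sum_le_sum htwo
  calc 2 * minrkOn q K S ≤ 2 * T.card := by omega
  _ ≤ ∑ i ∈ S, (R i).card := hcount
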